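/- Let Φ be a Hausdorff topological space equipped with a bornology 𝔹 (a collection of nonempty subsets), and let S(t) be a semigroup on Φ possessing a compact 𝔹-attracting set 𝓑 (for every B ∈ 𝔹 and every neighbourhood O of 𝓑 there is T with S(t)B ⊆ O for t ≥ T). Then the set 𝓐 := closure(⋃_{B∈𝔹} ω(B)) is a 𝔹-attractor: it is compact, it attracts every B ∈ 𝔹, and it is minimal (by inclusion) among compact sets attracting every B ∈ 𝔹. -/
import Mathlib


open Set Filter Topology

/-- The ω-limit set of `B` under the semigroup `S`:
`ω(B) = ⋂_{T ≥ 0} closure (⋃_{t ≥ T} S(t)B)`. -/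
def omegaLimitSet {Φ : Type*} [TopologicalSpace Φ] (S : ℝ → Φ → Φ) (B : Set Φ) : Set Φ :=
  ⋂ T ∈ Ici (0 : ℝ), closure (⋃ t ∈ Ici T, S t '' B)

/-- `K` attracts `B` under the semigroup `S`: for every open neighbourhood `O` of `K`
there is `T ≥ 0` with `S(t)B ⊆ O` for all `t ≥ T`. -/
def Attracts {Φ : Type*} [TopologicalSpace Φ] (S : ℝ → Φ → Φ) (K B : Set Φ) : Prop :=
  ∀ O : Set Φ, IsOpen O → K ⊆ O → ∃ T : ℝ, 0 ≤ T ∧ ∀ t ≥ T, S t '' B ⊆ O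

/-- If a compact set `K` attracts `B`, then `ω(B) ⊆ K`. -/
lemma omegaLimitSet_subset_of_attracts {Φ : Type*} [TopologicalSpace Φ] [T2Space Φ]
    (S : ℝ → Φ → Φ) {K B : Set Φ} (hK : IsCompact K) (hA : Attracts S K B) :
    omegaLimitSet S B ⊆ K := by
  intro x hx
  by_contra hxK
  obtain ⟨U, V, hU, hV, hKU, hxV, hdisj⟩ := hK.separation_of_notMem hxK
  obtain ⟨T, hT0, hT⟩ := hA U hU hKU
  have hx' : x ∈ closure (⋃ t ∈ Ici T, S t '' B) := by
    have := mem_iInter₂.mp hx T hT0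
    exact this
  have hsub : (⋃ t ∈ Ici T, S t '' B) ⊆ U := iUnion₂_subset fun t ht => hT t ht
  have : x ∈ closure U := closure_mono hsub hx'
  have hUV : closure U ⊆ Vᶜ :=
    closure_minimal (fun y hy hyV => disjoint_left.mp hdisj hy hyV) hV.isClosed_compl
  exact hUV this hxV

theorem stmt_3 {Φ : Type*} [TopologicalSpace Φ] [T2Space Φ]
    (S : ℝ → Φ → Φ)
    (hS0 : S 0 = id)
    (hSadd : ∀ t s : ℝ, 0 ≤ t → 0 ≤ s → S (t + s) = S t ∘ S s)
    (𝔹 : Set (Set Φ)) (h𝔹 : ∀ B ∈ 𝔹, B.Nonempty)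
    (𝓑 : Set Φ) (h𝓑 : IsCompact 𝓑)
    (hattr : ∀ B ∈ 𝔹, Attracts S 𝓑 B) :
    IsCompact (closure (⋃ B ∈ 𝔹, omegaLimitSet S B)) ∧
    (∀ B ∈ 𝔹, Attracts S (closure (⋃ B ∈ 𝔹, omegaLimitSet S B)) B) ∧
    (∀ K : Set Φ, IsCompact K → (∀ B ∈ 𝔹, Attracts S K B) →
      closure (⋃ B ∈ 𝔹, omegaLimitSet S B) ⊆ K) := by
  set 𝓐 := closure (⋃ B ∈ 𝔹, omegaLimitSet S B) with h𝓐
  -- minimality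
  have hmin : ∀ K : Set Φ, IsCompact K → (∀ B ∈ 𝔹, Attracts S K B) → 𝓐 ⊆ K := by
    intro K hK hA
    refine closure_minimal (iUnion₂_subset fun B hB => ?_) hK.isClosed
    exact omegaLimitSet_subset_of_attracts S hK (hA B hB)
  -- compactness
  have hsub𝓑 : 𝓐 ⊆ 𝓑 := hmin 𝓑 h𝓑 hattr
  have hcomp : IsCompact 𝓐 := h𝓑.of_isClosed_subset isClosed_closure hsub𝓑
  refine ⟨hcomp, ?_, hmin⟩
  -- attraction
  intro B hB O hO h𝓐O
  -- the closed "tail" sets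
  set Z : ℝ → Set Φ := fun T => closure (⋃ t ∈ Ici (max T 0), S t '' B) with hZ
  have hZclosed : ∀ T, IsClosed (Z T) := fun T => isClosed_closure
  have hωO : omegaLimitSet S B ⊆ O := by
    refine subset_trans ?_ h𝓐O
    exact subset_trans (subset_iUnion₂ (s := fun B _ => omegaLimitSet S B) B hB)
      subset_closure
  have hinter : (𝓑 ∩ Oᶜ) ∩ ⋂ T, Z T = ∅ := by
    ext x
    simp only [mem_inter_iff, mem_iInter, mem_compl_iff, mem_empty_iff_false, iff_false]
    rintro ⟨⟨hx𝓑, hxO⟩, hxZ⟩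
    apply hxO
    apply hωO
    refine mem_iInter₂.mpr fun T hT => ?_
    have := hxZ T
    simp only [hZ] at this
    rwa [max_eq_left (mem_Ici.mp hT)] at this
  obtain ⟨F, hF⟩ := (h𝓑.inter_right hO.isClosed_compl).elim_finite_subfamily_closed Z
    hZclosed hinter
  obtain ⟨M, hM⟩ := F.exists_le
  set T1 : ℝ := max M 0 with hT1
  have hZmono : ∀ T ∈ F, Z T1 ⊆ Z T := by
    intro T hTF
    apply closure_mono
    apply iUnion₂_subset
    intro t ht
    refine subset_iUnion₂ (s := fun t _ => S t '' B) t ?_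
    have hT1T : max T 0 ≤ T1 := max_le (le_max_of_le_left (hM T hTF)) (le_max_right _ _)
    exact mem_Ici.mpr (le_trans hT1T (by simpa [hT1] using mem_Ici.mp ht))
  have hkey : (𝓑 ∩ Oᶜ) ∩ Z T1 = ∅ := by
    apply eq_empty_of_subset_empty
    rw [← hF]
    exact inter_subset_inter_right _ (subset_iInter₂ fun T hTF => hZmono T hTF)
  -- W is an open neighbourhood of 𝓑
  set W : Set Φ := O ∪ (Z T1)ᶜ with hW
  have hWopen : IsOpen W := hO.union (hZclosed T1).isOpen_compl
  have h𝓑W : 𝓑 ⊆ W := by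
    intro b hb
    by_cases hbZ : b ∈ Z T1
    · left
      by_contra hbO
      have : b ∈ (𝓑 ∩ Oᶜ) ∩ Z T1 := ⟨⟨hb, hbO⟩, hbZ⟩
      simp [hkey] at this
    · exact Or.inr hbZ
  obtain ⟨T2, hT20, hT2⟩ := hattr B hB W hWopen h𝓑W
  refine ⟨max T1 T2, le_trans hT20 (le_max_right _ _), fun t ht => ?_⟩
  have htT1 : max T1 0 ≤ t := by
    have h1 : max T1 0 = T1 := max_eq_left (le_max_right _ _)
    rw [h1]
    exact le_trans (le_max_left _ _) ht
  have htail : S t '' B ⊆ Z T1 :=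
    subset_trans (subset_iUnion₂ (s := fun t _ => S t '' B) t htT1) subset_closure
  have hinW : S t '' B ⊆ W := hT2 t (le_trans (le_max_right _ _) ht)
  intro x hx
  rcases hinW hx with hxO | hxZ
  · exact hxO
  · exact absurd (htail hx) hxZ
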